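/- arXiv:2212.07298 — 5 statements merged into one kernel-verified Lean document; each statement's English description precedes it below -/
import Mathlib

section
/- Let ν : (-∞,0) → ℝ₊ be an increasing function such that lim_{t→-∞} e^{-Bt} ν(t) ≤ A for some constants A, B > 0. Then for all p > B, liminf_{t→-∞} e^{-Bt} ∫_t^0 e^{-p(s-t)} dν(s) ≤ AB/(p-B), where the integral is the Lebesgue–Stieltjes integral with respect to ν. -/
open Filter MeasureTheory Real

set_option maxHeartbeats 1000000 in
/-- Calculus lemma: if `ν` is an increasing (Stieltjes) function, positive on the
negative axis, with `e^{-Bt} ν(t) → L ≤ A` as `t → -∞`, then for every `p > B`,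
`liminf_{t→-∞} e^{-Bt} ∫_t^0 e^{-p(s-t)} dν(s) ≤ A B / (p - B)`. -/
theorem calculus_lemma (ν : StieltjesFunction ℝ) (A B p : ℝ)
    (hA : 0 < A) (hB : 0 < B) (hp : B < p)
    (hpos : ∀ t < (0 : ℝ), 0 < ν t)
    (hlim : ∃ L ≤ A, Tendsto (fun t : ℝ => Real.exp (-B * t) * ν t) atBot (nhds L)) :
    Filter.liminf
      (fun t : ℝ =>
        Real.exp (-B * t) * ∫ s in Set.Ioc t 0, Real.exp (-p * (s - t)) ∂ν.measure)
      atBot ≤ A * B / (p - B) := by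
  obtain ⟨L, hLA, hL⟩ := hlim
  have hpB : (0:ℝ) < p - B := sub_pos.2 hp
  have hp0 : (0:ℝ) < p := hB.trans hp
  set F : ℝ → ℝ := fun t =>
    Real.exp (-B * t) * ∫ s in Set.Ioc t 0, Real.exp (-p * (s - t)) ∂ν.measure with hF
  have hFnonneg : ∀ t, 0 ≤ F t := fun t =>
    mul_nonneg (Real.exp_nonneg _) (integral_nonneg fun s => Real.exp_nonneg _)
  have hbdd : Filter.IsBoundedUnder (· ≥ ·) atBot F :=
    ⟨0, Filter.eventually_map.2 (Filter.Eventually.of_forall hFnonneg)⟩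
  have hL0 : 0 ≤ L := by
    refine ge_of_tendsto hL ?_
    filter_upwards [Filter.eventually_le_atBot (-1 : ℝ)] with t ht
    exact le_of_lt (mul_pos (Real.exp_pos _) (hpos t (by linarith)))
  have hν0 : 0 ≤ ν 0 := le_of_lt (lt_of_lt_of_le (hpos (-1) (by norm_num)) (ν.mono (by norm_num)))
  refine le_of_forall_pos_le_add fun δ hδ => ?_
  have hKpos : (0:ℝ) < p / (p - B) + 3 := by positivity
  set ε : ℝ := δ / (p / (p - B) + 3) with hεdef
  have hε : 0 < ε := div_pos hδ hKpos
  obtain ⟨T₀, hT₀⟩ := Filter.eventually_atBot.1 (Metric.tendsto_nhds.1 hL ε hε)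
  set T : ℝ := min T₀ (-1) with hTdef
  have hT0 : T < 0 := lt_of_le_of_lt (min_le_right _ _) (by norm_num)
  have hclose : ∀ t ≤ T, |Real.exp (-B * t) * ν t - L| < ε := fun t ht =>
    Real.dist_eq (Real.exp (-B*t) * ν t) L ▸ hT₀ t (le_trans ht (min_le_left _ _))
  have hee : ∀ x : ℝ, Real.exp (-B * x) * Real.exp (B * x) = 1 := fun x => by
    rw [← Real.exp_add]; norm_num
  have hub : ∀ t ≤ T, Real.exp (-B * t) * ν t ≤ L + ε := fun t ht =>
    le_of_lt (by have := abs_lt.1 (hclose t ht); linarith [this.2])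
  have hlb : ∀ t ≤ T, L - ε ≤ Real.exp (-B * t) * ν t := fun t ht =>
    le_of_lt (by have := abs_lt.1 (hclose t ht); linarith [this.1])
  have hνub : ∀ t ≤ T, ν t ≤ (L + ε) * Real.exp (B * t) := by
    intro t ht
    have h1 := hub t ht
    have h2 := hee t
    nlinarith [Real.exp_pos (B * t), Real.exp_pos (-B * t)]
  -- main estimate
  have main : ∀ t ≤ T, F t ≤ ν 0 * Real.exp (-(p*T)) * Real.exp ((p-B)*t)
      + ((L+ε) * (p/(p-B)) - (L-ε)) + (L+ε) * Real.exp (-(p*T)) * Real.exp (p*t) := by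
    intro t ht
    have ht0 : t < 0 := lt_of_le_of_lt ht hT0
    set R : ℝ := Real.exp (-(p*(T-t))) with hRdef
    have hR0 : 0 < R := Real.exp_pos _
    have hR1 : R ≤ 1 := by
      rw [hRdef, show (1:ℝ) = Real.exp 0 from (Real.exp_zero).symm]
      exact Real.exp_le_exp.2 (by nlinarith)
    set y : ℝ := -(B/p) with hydef
    have hy1 : (-1:ℝ) < y := by
      have := (div_lt_one hp0).2 hp
      rw [hydef]; linarith
    have hy0 : y ≤ 0 := by
      rw [hydef]
      exact neg_nonpos.2 (div_nonneg hB.le hp0.le)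
    set g : ℝ → ℝ := fun s => Real.exp (-p * (s - t)) with hgdef
    set h : ℝ → ℝ := fun r => (L+ε) * Real.exp (B*t) * r ^ y - ν t with hhdef
    set μ' := ν.measure.restrict (Set.Ioc t 0) with hμ'def
    have hgc : Continuous g := by
      rw [hgdef]; exact Real.continuous_exp.comp (continuous_const.mul (continuous_id.sub continuous_const))
    -- Step A: layercake representation
    have eqA : ∫ s in Set.Ioc t 0, g s ∂ν.measure
        = (∫⁻ r in Set.Ioi (0:ℝ), μ' {s | r < g s}).toReal := by
      rw [integral_eq_lintegral_of_nonneg_ae (ae_of_all _ fun s => (Real.exp_pos _).le)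
        hgc.aestronglyMeasurable,
        lintegral_eq_lintegral_meas_lt μ' (ae_of_all _ fun s => (Real.exp_pos _).le)
        hgc.aemeasurable]
    have hνt : ν t ≤ (L+ε) * Real.exp (B*t) := hνub t ht
    have hnn : ∀ r ∈ Set.Ioc R 1, 0 ≤ h r := by
      intro r hr
      have hr0 : 0 < r := lt_trans hR0 hr.1
      have h1 : (1:ℝ) ≤ r ^ y := Real.one_le_rpow_of_pos_of_le_one_of_nonpos hr0 hr.2 hy0
      have h2 : 0 ≤ (L+ε) * Real.exp (B*t) := by positivity
      simp only [hhdef]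
      nlinarith
    have hcont : ContinuousOn h (Set.Icc R 1) := by
      refine ContinuousOn.sub (continuousOn_const.mul ?_) continuousOn_const
      intro r hr
      exact (Real.continuousAt_rpow_const r y
        (Or.inl (ne_of_gt (lt_of_lt_of_le hR0 hr.1)))).continuousWithinAt
    have hint : IntegrableOn h (Set.Ioc R 1) :=
      (hcont.integrableOn_Icc).mono_set Set.Ioc_subset_Icc_self
    set M : ℝ := ∫ r in Set.Ioc R 1, h r with hMdef
    have hM0 : 0 ≤ M := setIntegral_nonneg measurableSet_Ioc hnn
    -- pointwise bound in the middle range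
    have hmid : ∀ r ∈ Set.Ioc R 1, μ' {s | r < g s} ≤ ENNReal.ofReal (h r) := by
      intro r hr
      have hr0 : 0 < r := lt_trans hR0 hr.1
      set c : ℝ := t - Real.log r / p with hcdef
      have hsetEq : {s : ℝ | r < g s} = Set.Iio c := by
        ext s
        simp only [Set.mem_setOf_eq, Set.mem_Iio, hgdef]
        rw [← Real.log_lt_iff_lt_exp hr0]
        constructor
        · intro hlog
          have : Real.log r / p < t - s := (div_lt_iff₀ hp0).2 (by nlinarith)
          rw [hcdef]; linarith
        · intro hs
          have h5 : Real.log r / p < t - s := by rw [hcdef] at hs; linarith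
          have := (div_lt_iff₀ hp0).1 h5
          nlinarith
      have hcT : c < T := by
        have hlR : Real.log R < Real.log r := Real.log_lt_log hR0 hr.1
        rw [hRdef, Real.log_exp] at hlR
        have : -(T - t) < Real.log r / p := (lt_div_iff₀ hp0).2 (by nlinarith)
        rw [hcdef]; linarith
      have h1 : ν c ≤ (L+ε) * Real.exp (B*c) := hνub c hcT.le
      have h2 : Real.exp (B*c) = Real.exp (B*t) * r ^ y := by
        rw [Real.rpow_def_of_pos hr0, ← Real.exp_add, hcdef, hydef]
        congr 1
        field_simp
        ring
      have h3 : ν c - ν t ≤ h r := by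
        rw [h2] at h1
        simp only [hhdef]
        nlinarith
      calc μ' {s | r < g s} = ν.measure ({s | r < g s} ∩ Set.Ioc t 0) :=
            Measure.restrict_apply' measurableSet_Ioc
        _ ≤ ν.measure (Set.Ioc t c) := by
            refine measure_mono ?_
            rw [hsetEq]
            rintro s ⟨hs1, hs2⟩
            exact ⟨hs2.1, le_of_lt hs1⟩
        _ = ENNReal.ofReal (ν c - ν t) := ν.measure_Ioc t c
        _ ≤ ENNReal.ofReal (h r) := ENNReal.ofReal_le_ofReal h3
    -- piece bounds
    have piece1 : ∫⁻ r in Set.Ioc (0:ℝ) R, μ' {s | r < g s}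
        ≤ ENNReal.ofReal (ν 0) * ENNReal.ofReal R := by
      have hb : ∀ r ∈ Set.Ioc (0:ℝ) R, μ' {s | r < g s} ≤ ENNReal.ofReal (ν 0) := by
        intro r _
        calc μ' {s | r < g s} ≤ μ' Set.univ := measure_mono (Set.subset_univ _)
          _ = ν.measure (Set.Ioc t 0) := by rw [hμ'def, Measure.restrict_apply_univ]
          _ = ENNReal.ofReal (ν 0 - ν t) := ν.measure_Ioc t 0
          _ ≤ ENNReal.ofReal (ν 0) := ENNReal.ofReal_le_ofReal (by linarith [hpos t ht0])
      calc ∫⁻ r in Set.Ioc (0:ℝ) R, μ' {s | r < g s}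
          ≤ ∫⁻ _ in Set.Ioc (0:ℝ) R, ENNReal.ofReal (ν 0) :=
            setLIntegral_mono' measurableSet_Ioc hb
        _ = ENNReal.ofReal (ν 0) * volume (Set.Ioc (0:ℝ) R) := setLIntegral_const _ _
        _ = ENNReal.ofReal (ν 0) * ENNReal.ofReal R := by rw [Real.volume_Ioc, sub_zero]
    have piece2 : ∫⁻ r in Set.Ioc R 1, μ' {s | r < g s} ≤ ENNReal.ofReal M := by
      rw [hMdef, ofReal_integral_eq_lintegral_ofReal hint
        ((ae_restrict_iff' measurableSet_Ioc).2 (ae_of_all _ hnn))]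
      exact setLIntegral_mono' measurableSet_Ioc hmid
    have piece3 : ∫⁻ r in Set.Ioi (1:ℝ), μ' {s | r < g s} = 0 := by
      have hb : ∀ r ∈ Set.Ioi (1:ℝ), μ' {s | r < g s} = 0 := by
        intro r hr
        rw [hμ'def, Measure.restrict_apply' measurableSet_Ioc]
        have hemp : {s : ℝ | r < g s} ∩ Set.Ioc t 0 = ∅ := by
          rw [Set.eq_empty_iff_forall_notMem]
          rintro s ⟨hs1, hs2⟩
          have hg1 : g s < 1 := by
            rw [hgdef, show (1:ℝ) = Real.exp 0 from (Real.exp_zero).symm]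
            exact Real.exp_lt_exp.2 (by nlinarith [hs2.1])
          have hrs : r < g s := hs1
          have : (1:ℝ) < r := hr
          linarith
        rw [hemp, measure_empty]
      refine le_antisymm ?_ zero_le
      calc ∫⁻ r in Set.Ioi (1:ℝ), μ' {s | r < g s}
          ≤ ∫⁻ _ in Set.Ioi (1:ℝ), 0 :=
            setLIntegral_mono' measurableSet_Ioi (fun r hr => le_of_eq (hb r hr))
        _ = 0 := by simp
    have hlint : ∫⁻ r in Set.Ioi (0:ℝ), μ' {s | r < g s} ≤ ENNReal.ofReal (ν 0 * R + M) := by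
      have e1 : ∫⁻ r in Set.Ioi (0:ℝ), μ' {s | r < g s}
          = (∫⁻ r in Set.Ioc (0:ℝ) 1, μ' {s | r < g s})
            + ∫⁻ r in Set.Ioi (1:ℝ), μ' {s | r < g s} := by
        rw [← lintegral_union measurableSet_Ioi (Set.Ioc_disjoint_Ioi le_rfl),
          Set.Ioc_union_Ioi_eq_Ioi zero_le_one]
      have e2 : ∫⁻ r in Set.Ioc (0:ℝ) 1, μ' {s | r < g s}
          = (∫⁻ r in Set.Ioc (0:ℝ) R, μ' {s | r < g s})
            + ∫⁻ r in Set.Ioc R 1, μ' {s | r < g s} := by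
        rw [← lintegral_union measurableSet_Ioc (Set.Ioc_disjoint_Ioc_of_le le_rfl),
          Set.Ioc_union_Ioc_eq_Ioc hR0.le hR1]
      rw [e1, e2, piece3, add_zero]
      calc (∫⁻ r in Set.Ioc (0:ℝ) R, μ' {s | r < g s})
            + ∫⁻ r in Set.Ioc R 1, μ' {s | r < g s}
          ≤ ENNReal.ofReal (ν 0) * ENNReal.ofReal R + ENNReal.ofReal M :=
            add_le_add piece1 piece2
        _ = ENNReal.ofReal (ν 0 * R + M) := by
            rw [← ENNReal.ofReal_mul hν0, ← ENNReal.ofReal_add (mul_nonneg hν0 hR0.le) hM0]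
    have hIle : ∫ s in Set.Ioc t 0, g s ∂ν.measure ≤ ν 0 * R + M := by
      rw [eqA]
      exact ENNReal.toReal_le_of_le_ofReal (add_nonneg (mul_nonneg hν0 hR0.le) hM0) hlint
    -- bound M
    have hyp1 : y + 1 = (p-B)/p := by rw [hydef]; field_simp; ring
    have hy1pos : 0 < y + 1 := by rw [hyp1]; positivity
    have hrpow : ∫ r in Set.Ioc R 1, r ^ y ≤ p/(p-B) := by
      rw [← intervalIntegral.integral_of_le hR1, integral_rpow (Or.inl hy1), Real.one_rpow]
      have hRy : 0 ≤ R ^ (y+1) := Real.rpow_nonneg hR0.le _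
      have h1 : (1 - R^(y+1))/(y+1) ≤ 1/(y+1) :=
        (div_le_div_iff_of_pos_right hy1pos).2 (by linarith)
      have h2 : 1/(y+1) = p/(p-B) := by rw [hyp1, one_div_div]
      linarith
    have hc1 : ContinuousOn (fun r : ℝ => (L+ε) * Real.exp (B*t) * r ^ y) (Set.Icc R 1) := by
      refine continuousOn_const.mul ?_
      intro r hr
      exact (Real.continuousAt_rpow_const r y
        (Or.inl (ne_of_gt (lt_of_lt_of_le hR0 hr.1)))).continuousWithinAt
    have hi1 : IntegrableOn (fun r : ℝ => (L+ε) * Real.exp (B*t) * r ^ y) (Set.Ioc R 1) :=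
      (hc1.integrableOn_Icc).mono_set Set.Ioc_subset_Icc_self
    have hi2 : IntegrableOn (fun _ : ℝ => ν t) (Set.Ioc R 1) :=
      integrableOn_const measure_Ioc_lt_top.ne
    have hMle : M ≤ (L+ε) * Real.exp (B*t) * (p/(p-B)) - ν t * (1 - R) := by
      have hsplit : M = (L+ε) * Real.exp (B*t) * (∫ r in Set.Ioc R 1, r ^ y)
          - ν t * (1 - R) := by
        rw [hMdef]
        simp only [hhdef]
        rw [integral_sub hi1 hi2, integral_const_mul, setIntegral_const, Real.volume_real_Ioc]
        rw [max_eq_left (by linarith), smul_eq_mul]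
        ring
      rw [hsplit]
      have := mul_le_mul_of_nonneg_left hrpow
        (show 0 ≤ (L+ε) * Real.exp (B*t) by positivity)
      linarith
    -- final assembly
    have ha : (0:ℝ) < Real.exp (-B*t) := Real.exp_pos _
    have haR : Real.exp (-B*t) * R = Real.exp (-(p*T)) * Real.exp ((p-B)*t) := by
      rw [hRdef, ← Real.exp_add, ← Real.exp_add]
      congr 1
      ring
    have haE : Real.exp (-B*t) * ((L+ε) * Real.exp (B*t) * (p/(p-B)))
        = (L+ε) * (p/(p-B)) := by
      rw [show Real.exp (-B*t) * ((L+ε) * Real.exp (B*t) * (p/(p-B)))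
        = (Real.exp (-B*t) * Real.exp (B*t)) * ((L+ε) * (p/(p-B))) from by ring, hee t, one_mul]
    have hw1 : L - ε ≤ Real.exp (-B*t) * ν t := hlb t ht
    have hw2 : Real.exp (-B*t) * ν t ≤ L + ε := hub t ht
    have hFle : F t ≤ Real.exp (-B*t) * (ν 0 * R + M) := by
      rw [hF]
      exact mul_le_mul_of_nonneg_left hIle ha.le
    have hstep : Real.exp (-B*t) * (ν 0 * R + M)
        ≤ Real.exp (-B*t) * (ν 0 * R) + ((L+ε) * (p/(p-B))
          - Real.exp (-B*t) * ν t * (1 - R)) := by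
      have := mul_le_mul_of_nonneg_left hMle ha.le
      nlinarith [this, haE]
    have hlast : Real.exp (-B*t) * ν t * R ≤ (L+ε) * R :=
      mul_le_mul_of_nonneg_right hw2 hR0.le
    have haR2 : (L+ε) * R = (L+ε) * (Real.exp (-(p*T)) * Real.exp (p*t)) := by
      rw [hRdef, ← Real.exp_add]
      congr 2
      ring
    nlinarith [hFle, hstep, hlast, haR, haR2, hw1, hR0.le, hR1]
  -- eventual bounds on the exponential error terms
  have tend1 : Tendsto (fun t : ℝ => ν 0 * Real.exp (-(p*T)) * Real.exp ((p-B)*t)) atBot (nhds 0) := by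
    have h1 : Tendsto (fun t : ℝ => (p-B)*t) atBot atBot :=
      Filter.Tendsto.const_mul_atBot hpB tendsto_id
    have := (Real.tendsto_exp_atBot.comp h1).const_mul (ν 0 * Real.exp (-(p*T)))
    simpa using this
  have tend2 : Tendsto (fun t : ℝ => (L+ε) * Real.exp (-(p*T)) * Real.exp (p*t)) atBot (nhds 0) := by
    have h1 : Tendsto (fun t : ℝ => p*t) atBot atBot :=
      Filter.Tendsto.const_mul_atBot hp0 tendsto_id
    have := (Real.tendsto_exp_atBot.comp h1).const_mul ((L+ε) * Real.exp (-(p*T)))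
    simpa using this
  have ev : ∀ᶠ t in atBot, F t ≤ A * B / (p - B) + δ := by
    filter_upwards [Filter.eventually_le_atBot T, tend1.eventually_lt_const hε,
      tend2.eventually_lt_const hε] with t h1 h2 h3
    have h4 := main t h1
    have hεK : ε * (p / (p - B) + 3) = δ := div_mul_cancel₀ δ (ne_of_gt hKpos)
    have hLB : L * B / (p - B) ≤ A * B / (p - B) := by
      have : L * B ≤ A * B := mul_le_mul_of_nonneg_right hLA hB.le
      exact (div_le_div_iff_of_pos_right hpB).2 this
    have hid : (L+ε) * (p/(p-B)) - (L-ε) + ε + ε = L * B / (p - B) + ε * (p / (p - B) + 3) := by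
      field_simp
      ring
    linarith
  exact liminf_le_of_frequently_le ev.frequently hbdd
end

section
/- Let H be a complex Hilbert space, K a closed subspace, f₀ ∈ H with minimal-norm coset element f̃ ∈ f₀ + K, and let S be a set of bounded linear functionals vanishing on K whose common kernel (within the annihilator topology) is dense in the annihilator of K in the dual norm. Then the supremum of |ξ(f₀)|²/‖ξ‖² over ξ ∈ S equals ‖f̃‖². -/
/-- Dual formula for the minimal norm, computed over a dense subset `S` of the
annihilator of `K`: if `S` consists of functionals vanishing on `K` and is dense
(in dual norm) in the annihilator of `K`, then
`sup { |ξ(f₀)|²/‖ξ‖² : ξ ∈ S, ξ ≠ 0 } = ‖ft‖²` where `ft` is the minimal-norm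
element of the coset `f₀ + K`. -/
theorem minimal_norm_dual_formula_dense (H : Type*) [NormedAddCommGroup H]
    [InnerProductSpace ℂ H] [CompleteSpace H]
    (K : Submodule ℂ H) (hK : IsClosed (K : Set H)) (f₀ ft : H)
    (hft : ft ∈ {f : H | ∃ k ∈ K, f = f₀ + k})
    (hmin : ∀ f ∈ {f : H | ∃ k ∈ K, f = f₀ + k}, ‖ft‖ ≤ ‖f‖)
    (S : Set (H →L[ℂ] ℂ))
    (hS : S ⊆ {ξ : H →L[ℂ] ℂ | ∀ k ∈ K, ξ k = 0})
    (hdense : closure S = {ξ : H →L[ℂ] ℂ | ∀ k ∈ K, ξ k = 0}) :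
    sSup {c : ℝ | ∃ ξ ∈ S, ξ ≠ 0 ∧ c = ‖ξ f₀‖ ^ 2 / ‖ξ‖ ^ 2} = ‖ft‖ ^ 2 := by
  obtain ⟨k₀, hk₀, hft_eq⟩ := hft
  set T := {c : ℝ | ∃ ξ ∈ S, ξ ≠ 0 ∧ c = ‖ξ f₀‖ ^ 2 / ‖ξ‖ ^ 2} with hT
  -- orthogonality of ft to K
  have horth : ∀ k ∈ K, (inner ℂ ft k : ℂ) = 0 := by
    have hv : (-k₀ : H) ∈ K := K.neg_mem hk₀
    have heq : f₀ - (-k₀) = ft := by rw [hft_eq]; abel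
    have hinf : ‖f₀ - (-k₀)‖ = ⨅ w : K, ‖f₀ - w‖ := by
      apply le_antisymm
      · apply le_ciInf
        intro w
        rw [heq]
        have : f₀ - (w : H) = f₀ + (-(w : H)) := by abel
        rw [this]
        exact hmin _ ⟨-(w : H), K.neg_mem w.2, rfl⟩
      · exact ciInf_le ⟨0, fun x ⟨w, hw⟩ => hw ▸ norm_nonneg _⟩ (⟨-k₀, hv⟩ : K)
    have := (Submodule.norm_eq_iInf_iff_inner_eq_zero K hv).1 hinf
    intro k hk
    have h := this k hk
    rwa [heq] at h
  -- every ξ ∈ S agrees on f₀ and ft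
  have hξf : ∀ ξ ∈ S, ξ ft = ξ f₀ := by
    intro ξ hξ
    rw [hft_eq, map_add, hS hξ k₀ hk₀, add_zero]
  -- upper bound
  have hub : ∀ c ∈ T, c ≤ ‖ft‖ ^ 2 := by
    rintro c ⟨ξ, hξS, hξ0, rfl⟩
    have hn : (0 : ℝ) < ‖ξ‖ ^ 2 := pow_pos (norm_pos_iff.2 hξ0) 2
    rw [div_le_iff₀ hn]
    have h1 : ‖ξ f₀‖ ≤ ‖ξ‖ * ‖ft‖ := by
      rw [← hξf ξ hξS]; exact ξ.le_opNorm ft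
    calc ‖ξ f₀‖ ^ 2 ≤ (‖ξ‖ * ‖ft‖) ^ 2 := by
          exact pow_le_pow_left₀ (norm_nonneg _) h1 2
      _ = ‖ft‖ ^ 2 * ‖ξ‖ ^ 2 := by ring
  have hbdd : BddAbove T := ⟨‖ft‖ ^ 2, hub⟩
  by_cases hft0 : ft = 0
  · -- then every element of T is 0
    have hT0 : T ⊆ {0} := by
      rintro c hc
      have h1 := hub c hc
      obtain ⟨ξ, _, _, rfl⟩ := hc
      have h2 : (0:ℝ) ≤ ‖ξ f₀‖ ^ 2 / ‖ξ‖ ^ 2 := by positivity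
      simp only [hft0, norm_zero] at h1
      have : ‖ξ f₀‖ ^ 2 / ‖ξ‖ ^ 2 = 0 := by nlinarith
      exact this
    rcases T.eq_empty_or_nonempty with hTe | hTne
    · rw [hTe, Real.sSup_empty, hft0]; simp
    · have : T = {0} := Set.Subset.antisymm hT0 (by
        obtain ⟨c, hc⟩ := hTne
        have := hT0 hc
        simp only [Set.mem_singleton_iff] at this
        subst this
        exact Set.singleton_subset_iff.2 hc)
      rw [this, csSup_singleton, hft0]; simp
  · have hftpos : (0:ℝ) < ‖ft‖ := norm_pos_iff.2 hft0
    set ξ₀ : H →L[ℂ] ℂ := innerSL ℂ ft with hξ₀def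
    have hξ₀norm : ‖ξ₀‖ = ‖ft‖ := innerSL_apply_norm (𝕜 := ℂ) ft
    have hξ₀f₀ : ‖ξ₀ f₀‖ = ‖ft‖ ^ 2 := by
      have : ξ₀ f₀ = (inner ℂ ft ft : ℂ) := by
        have : f₀ = ft + (-k₀) := by rw [hft_eq]; abel
        rw [this]
        simp only [hξ₀def, innerSL_apply_apply, inner_add_right, inner_neg_right,
          horth k₀ hk₀, neg_zero, add_zero]
      rw [this, inner_self_eq_norm_sq_to_K]
      simp [norm_pow]
    have hξ₀cl : ξ₀ ∈ closure S := by
      rw [hdense]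
      intro k hk
      simpa [hξ₀def, innerSL_apply_apply] using horth k hk
    -- continuity of g at ξ₀
    set g : (H →L[ℂ] ℂ) → ℝ := fun ξ => ‖ξ f₀‖ ^ 2 / ‖ξ‖ ^ 2 with hg
    have hgcont : ContinuousAt g ξ₀ := by
      apply ContinuousAt.div
      · exact ((ContinuousLinearMap.apply ℂ ℂ f₀).continuous.norm.pow 2).continuousAt
      · exact (continuous_norm.pow 2).continuousAt
      · rw [hξ₀norm]; positivity
    have hgξ₀ : g ξ₀ = ‖ft‖ ^ 2 := by
      rw [hg]
      simp only [hξ₀f₀, hξ₀norm]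
      field_simp
    -- key approximation
    have key : ∀ ε > 0, ∃ c ∈ T, ‖ft‖ ^ 2 - ε < c := by
      intro ε hε
      obtain ⟨δ, hδ, hδball⟩ := Metric.continuousAt_iff.1 hgcont ε hε
      set δ' := min δ (‖ft‖ / 2) with hδ'def
      have hδ'pos : 0 < δ' := lt_min hδ (by positivity)
      obtain ⟨ξ, hξS, hdist⟩ := Metric.mem_closure_iff.1 hξ₀cl δ' hδ'pos
      have hdist' : dist ξ ξ₀ < δ' := by rwa [dist_comm]
      have hξne : ξ ≠ 0 := by
        intro h
        rw [h] at hdist'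
        have : ‖ξ₀‖ < δ' := by simpa [dist_eq_norm] using hdist'
        rw [hξ₀norm] at this
        have : ‖ft‖ < ‖ft‖ / 2 := lt_of_lt_of_le this (min_le_right _ _)
        linarith
      have hclose : dist (g ξ) (g ξ₀) < ε :=
        hδball (lt_of_lt_of_le hdist' (min_le_left _ _))
      refine ⟨g ξ, ⟨ξ, hξS, hξne, rfl⟩, ?_⟩
      rw [← hgξ₀]
      have := abs_sub_lt_iff.1 (by rwa [Real.dist_eq] at hclose)
      linarith [this.2]
    have hTne : T.Nonempty := by
      obtain ⟨c, hc, _⟩ := key 1 one_pos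
      exact ⟨c, hc⟩
    apply le_antisymm
    · exact csSup_le hTne hub
    · by_contra h
      push_neg at h
      obtain ⟨c, hcT, hc⟩ := key (‖ft‖ ^ 2 - sSup T) (by linarith)
      have := le_csSup hbdd hcT
      linarith
end

section
/- Fix w ∈ ℂ^r and a unit vector h ∈ ℂ^r. In the affine chart on ℙ_{r-1} centered at [h] (with v = h + z, z ⊥ h), as t → -∞ one has ∫_{A_t} |⟨v, conj(w)⟩|²/|v|² dV_FS ~ (π^{r-1}/(r-1)!) e^{(r-1)t} |⟨h, conj(w)⟩|², where A_t is the ball { z : |z|² ≤ e^t/(1-e^t) } and dV_FS is the Fubini–Study volume form. -/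
open Real MeasureTheory Filter

lemma vol_sum_sq_lt (n : ℕ) {u : ℝ} (hu : 0 < u) :
    volume {z : Fin n → ℂ | ∑ i, ‖z i‖ ^ 2 < u}
      = ENNReal.ofReal (π ^ n / (n.factorial : ℝ) * u ^ n) := by
  rcases Nat.eq_zero_or_pos n with hn | hn
  · subst hn
    have hset : {z : Fin 0 → ℂ | ∑ i, ‖z i‖ ^ 2 < u} = Set.univ := by
      ext z; simp [hu]
    rw [hset]
    rw [show (volume : Measure (Fin 0 → ℂ)) = Measure.pi (fun _ => volume) from rfl,
      Measure.pi_of_empty]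
    simp
  · have : Nonempty (Fin n) := Fin.pos_iff_nonempty.mp hn
    have key := Complex.volume_sum_rpow_lt (ι := Fin n) one_le_two (Real.sqrt u)
    have hset : {z : Fin n → ℂ | ∑ i, ‖z i‖ ^ 2 < u}
        = {z : Fin n → ℂ | (∑ i, ‖z i‖ ^ (2:ℝ)) ^ ((1:ℝ)/(2:ℝ)) < Real.sqrt u} := by
      ext z
      have hz : (0:ℝ) ≤ ∑ i, ‖z i‖ ^ 2 := by positivity
      simp only [Set.mem_setOf_eq, Real.rpow_two]
      rw [← Real.sqrt_eq_rpow, Real.sqrt_lt_sqrt_iff hz]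
    rw [hset, key]
    rw [Fintype.card_fin]
    have h1 : ((2:ℝ)/2 + 1) = 2 := by norm_num
    have h2 : (2 * (n:ℝ)/2 + 1) = (n:ℝ) + 1 := by ring
    rw [h1, h2, Real.Gamma_two, mul_one, Real.Gamma_nat_eq_factorial]
    rw [← ENNReal.ofReal_pow (Real.sqrt_nonneg u), ← ENNReal.ofReal_mul (by positivity)]
    congr 1
    rw [pow_mul, Real.sq_sqrt hu.le]
    ring

set_option maxHeartbeats 1000000 in
/-- In the affine chart at a unit vector `h` of `ℂ^r` (points `v = h + ι z` where `ι`
is a unitary identification of `ℂ^{r-1}` with `h^⊥`), as `t → -∞` the integral of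
`|v·w|²/|v|²` against the Fubini–Study volume over the ball
`A_t = {‖z‖² < e^t/(1-e^t)}` is asymptotic to `(π^{r-1}/(r-1)!) e^{(r-1)t} |h·w|²`,
where `x·y = ∑ i, x i * y i`. -/
theorem chart_integral_asymptotics (r : ℕ) (hr : 1 ≤ r)
    (h w : EuclideanSpace ℂ (Fin r)) (hh : ‖h‖ = 1)
    (ι : (Fin (r - 1) → ℂ) →ₗ[ℂ] EuclideanSpace ℂ (Fin r))
    (hι : ∀ z : Fin (r - 1) → ℂ, ‖ι z‖ ^ 2 = ∑ i, ‖z i‖ ^ 2)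
    (hrange : LinearMap.range ι = (ℂ ∙ h)ᗮ)
    (hw : (∑ i, h i * w i) ≠ 0) :
    Tendsto
      (fun t : ℝ =>
        (∫ z in {z : Fin (r - 1) → ℂ |
            ∑ i, ‖z i‖ ^ 2 < Real.exp t / (1 - Real.exp t)},
          ‖∑ i, (h + ι z) i * w i‖ ^ 2 / ‖h + ι z‖ ^ 2 *
            (1 / (1 + ∑ i, ‖z i‖ ^ 2) ^ r)) /
        (π ^ (r - 1) / (Nat.factorial (r - 1)) * Real.exp (((r : ℝ) - 1) * t) *
          ‖∑ i, h i * w i‖ ^ 2))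
      atBot (nhds 1) := by
  classical
  -- orthogonality and the chart norm identity
  have horth : ∀ z : Fin (r - 1) → ℂ, (inner ℂ h (ι z) : ℂ) = 0 := by
    intro z
    have hz : ι z ∈ (ℂ ∙ h)ᗮ := hrange ▸ LinearMap.mem_range_self ι z
    exact (Submodule.mem_orthogonal _ _).mp hz h (Submodule.mem_span_singleton_self h)
  have hnorm : ∀ z : Fin (r - 1) → ℂ, ‖h + ι z‖ ^ 2 = 1 + ∑ i, ‖z i‖ ^ 2 := by
    intro z
    rw [@norm_add_sq ℂ _ _ _ _ h (ι z), horth z, hh, hι z]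
    simp
  -- continuity facts
  have hι_cont : Continuous ι := ι.continuous_of_finiteDimensional
  have hcoord : ∀ i : Fin r, Continuous fun v : EuclideanSpace ℂ (Fin r) => v i := fun i =>
    (continuous_apply i).comp (PiLp.continuous_ofLp 2 fun _ : Fin r => ℂ)
  have hadd_cont : Continuous fun z : Fin (r - 1) → ℂ => h + ι z :=
    continuous_const.add hι_cont
  have hsum_cont : Continuous fun z : Fin (r - 1) → ℂ => ∑ i, (h + ι z) i * w i := by
    apply continuous_finset_sum
    intro i _
    exact ((hcoord i).comp hadd_cont).mul continuous_const
  have hQcont : Continuous fun z : Fin (r - 1) → ℂ => ∑ i, ‖z i‖ ^ 2 := by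
    apply continuous_finset_sum
    intro i _
    exact (continuous_apply i).norm.pow 2
  have hQnonneg : ∀ z : Fin (r - 1) → ℂ, (0:ℝ) ≤ ∑ i, ‖z i‖ ^ 2 :=
    fun z => Finset.sum_nonneg fun i _ => sq_nonneg _
  -- abbreviations
  set c : ℂ := ∑ i, h i * w i with hc
  have hc0 : (0:ℝ) < ‖c‖ ^ 2 := pow_pos (norm_pos_iff.mpr hw) 2
  set C : ℝ := π ^ (r - 1) / (Nat.factorial (r - 1)) with hC
  have hCpos : 0 < C := by
    rw [hC]
    have := Nat.factorial_pos (r - 1)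
    positivity
  set g : (Fin (r - 1) → ℂ) → ℝ := fun z =>
    ‖∑ i, (h + ι z) i * w i‖ ^ 2 / ‖h + ι z‖ ^ 2 *
      (1 / (1 + ∑ i, ‖z i‖ ^ 2) ^ r) with hg
  have hgcont : Continuous g := by
    rw [hg]
    apply Continuous.mul
    · refine Continuous.div (hsum_cont.norm.pow 2) (hadd_cont.norm.pow 2) fun z => ?_
      rw [hnorm z]
      exact (by linarith [hQnonneg z] : (0:ℝ) < 1 + ∑ i, ‖z i‖ ^ 2).ne'
    · refine Continuous.div continuous_const ((continuous_const.add hQcont).pow r) fun z => ?_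
      exact pow_ne_zero r (by linarith [hQnonneg z] : (0:ℝ) < 1 + ∑ i, ‖z i‖ ^ 2).ne'
  have hg0 : g 0 = ‖c‖ ^ 2 := by
    rw [hg]
    simp only [map_zero, add_zero, Pi.zero_apply, norm_zero]
    simp [hc, hh]
  have hgnn : ∀ z, 0 ≤ g z := by
    intro z
    rw [hg]
    have h1 : (0:ℝ) ≤ 1 + ∑ i, ‖z i‖ ^ 2 := by linarith [hQnonneg z]
    exact mul_nonneg (div_nonneg (sq_nonneg _) (sq_nonneg _))
      (div_nonneg zero_le_one (pow_nonneg h1 r))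
  clear_value c C g
  clear hg hc
  have hr1 : ((r:ℝ) - 1) = ((r - 1 : ℕ) : ℝ) := by
    rw [Nat.cast_sub hr]; simp
  have hSmeas : ∀ u : ℝ, MeasurableSet {z : Fin (r - 1) → ℂ | ∑ i, ‖z i‖ ^ 2 < u} :=
    fun u => (isOpen_lt hQcont continuous_const).measurableSet
  -- the key integral estimate on small balls
  have key : ∀ ε > (0:ℝ), ∃ δ > (0:ℝ), ∀ u : ℝ, 0 < u → u ≤ δ →
      |(∫ z in {z : Fin (r - 1) → ℂ | ∑ i, ‖z i‖ ^ 2 < u}, g z)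
        - ‖c‖ ^ 2 * (C * u ^ (r - 1))| ≤ ε * (C * u ^ (r - 1)) := by
    intro ε hε
    obtain ⟨δ, hδ, hδ'⟩ := Metric.continuousAt_iff.mp hgcont.continuousAt ε hε
    refine ⟨δ ^ 2, by positivity, fun u hu hu' => ?_⟩
    set S := {z : Fin (r - 1) → ℂ | ∑ i, ‖z i‖ ^ 2 < u} with hS
    have hSsub : ∀ z ∈ S, |g z - ‖c‖ ^ 2| < ε := by
      intro z hz
      have h1 : ∀ i, ‖z i‖ < δ := by
        intro i
        refine lt_of_pow_lt_pow_left₀ 2 hδ.le ?_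
        calc ‖z i‖ ^ 2 ≤ ∑ j, ‖z j‖ ^ 2 :=
              Finset.single_le_sum (fun j _ => sq_nonneg ‖z j‖) (Finset.mem_univ i)
          _ < u := hz
          _ ≤ δ ^ 2 := hu'
      have hz' : dist z 0 < δ := by
        rw [dist_zero_right]
        exact (pi_norm_lt_iff hδ).mpr h1
      have := hδ' hz'
      rwa [Real.dist_eq, hg0] at this
    have hVpos : 0 < C * u ^ (r - 1) := mul_pos hCpos (pow_pos hu _)
    have hvolS : volume S = ENNReal.ofReal (C * u ^ (r - 1)) := by
      rw [hS, vol_sum_sq_lt _ hu, hC]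
    have hfin : volume S ≠ ⊤ := by rw [hvolS]; exact ENNReal.ofReal_ne_top
    have hVeq : (volume S).toReal = C * u ^ (r - 1) := by
      rw [hvolS, ENNReal.toReal_ofReal hVpos.le]
    have hint : IntegrableOn g S := by
      refine Measure.integrableOn_of_bounded hfin hgcont.aestronglyMeasurable
        (M := ‖c‖ ^ 2 + ε) ?_
      refine (ae_restrict_iff' (hSmeas u)).mpr (Filter.Eventually.of_forall fun z hz => ?_)
      have := (abs_lt.mp (hSsub z hz)).2
      rw [Real.norm_eq_abs, abs_of_nonneg (hgnn z)]
      linarith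
    have hup : (∫ z in S, g z) ≤ (‖c‖ ^ 2 + ε) * (C * u ^ (r - 1)) := by
      calc (∫ z in S, g z) ≤ ∫ _z in S, (‖c‖ ^ 2 + ε) :=
            setIntegral_mono_on hint (integrableOn_const hfin)
              (hSmeas u) (fun z hz => by linarith [(abs_lt.mp (hSsub z hz)).2])
        _ = (‖c‖ ^ 2 + ε) * (C * u ^ (r - 1)) := by
            rw [setIntegral_const, smul_eq_mul, measureReal_def, hVeq, mul_comm]
    have hlo : (‖c‖ ^ 2 - ε) * (C * u ^ (r - 1)) ≤ ∫ z in S, g z := by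
      calc (‖c‖ ^ 2 - ε) * (C * u ^ (r - 1)) = ∫ _z in S, (‖c‖ ^ 2 - ε) := by
            rw [setIntegral_const, smul_eq_mul, measureReal_def, hVeq, mul_comm]
        _ ≤ ∫ z in S, g z :=
            setIntegral_mono_on (integrableOn_const hfin) hint
              (hSmeas u) (fun z hz => by linarith [(abs_lt.mp (hSsub z hz)).1])
    rw [abs_le]
    constructor <;> nlinarith [hup, hlo]
  -- elementary limits
  have hexp0 : Tendsto (fun t : ℝ => Real.exp t) atBot (nhds 0) := Real.tendsto_exp_atBot
  have hone : Tendsto (fun t : ℝ => 1 - Real.exp t) atBot (nhds 1) := by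
    simpa using tendsto_const_nhds.sub hexp0
  have hs0 : Tendsto (fun t : ℝ => Real.exp t / (1 - Real.exp t)) atBot (nhds 0) := by
    have := hexp0.div hone one_ne_zero
    rwa [zero_div] at this
  have hev1 : ∀ᶠ t : ℝ in atBot, Real.exp t < 1 :=
    hexp0.eventually_lt_const one_pos
  have hT2 : Tendsto (fun t : ℝ => (1 / (1 - Real.exp t)) ^ (r - 1)) atBot (nhds 1) := by
    have h1 : Tendsto (fun t : ℝ => (1:ℝ) / (1 - Real.exp t)) atBot (nhds (1/1)) :=
      Tendsto.div tendsto_const_nhds hone one_ne_zero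
    rw [div_one] at h1
    simpa using h1.pow (r - 1)
  have hT1 : Tendsto (fun t : ℝ =>
      (∫ z in {z : Fin (r - 1) → ℂ | ∑ i, ‖z i‖ ^ 2 < Real.exp t / (1 - Real.exp t)}, g z) /
        (‖c‖ ^ 2 * (C * (Real.exp t / (1 - Real.exp t)) ^ (r - 1)))) atBot (nhds 1) := by
    rw [Metric.tendsto_nhds]
    intro ε hε
    have hε' : (0:ℝ) < ε * ‖c‖ ^ 2 / 2 := by
      have := mul_pos hε hc0
      linarith
    obtain ⟨δ, hδ, hkey⟩ := key (ε * ‖c‖ ^ 2 / 2) hε'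
    filter_upwards [hev1, hs0.eventually_lt_const hδ] with t ht hδt
    have hspos : 0 < Real.exp t / (1 - Real.exp t) :=
      div_pos (Real.exp_pos t) (by linarith)
    have h1 := hkey _ hspos hδt.le
    have hVpos : 0 < C * (Real.exp t / (1 - Real.exp t)) ^ (r - 1) :=
      mul_pos hCpos (pow_pos hspos _)
    have hD : 0 < ‖c‖ ^ 2 * (C * (Real.exp t / (1 - Real.exp t)) ^ (r - 1)) :=
      mul_pos hc0 hVpos
    rw [Real.dist_eq, div_sub_one hD.ne', abs_div, abs_of_pos hD, div_lt_iff₀ hD]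
    nlinarith [h1, mul_pos hε hD]
  -- assembling
  have heq : (fun t : ℝ =>
        (∫ z in {z : Fin (r - 1) → ℂ |
            ∑ i, ‖z i‖ ^ 2 < Real.exp t / (1 - Real.exp t)}, g z) /
          (C * Real.exp (((r : ℝ) - 1) * t) * ‖c‖ ^ 2))
      =ᶠ[atBot] (fun t : ℝ =>
        ((∫ z in {z : Fin (r - 1) → ℂ |
            ∑ i, ‖z i‖ ^ 2 < Real.exp t / (1 - Real.exp t)}, g z) /
          (‖c‖ ^ 2 * (C * (Real.exp t / (1 - Real.exp t)) ^ (r - 1)))) *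
        (1 / (1 - Real.exp t)) ^ (r - 1)) := by
    filter_upwards [hev1] with t ht
    have he := Real.exp_pos t
    have h1e : (0:ℝ) < 1 - Real.exp t := by linarith
    rw [hr1, Real.exp_nat_mul]
    rw [div_pow, div_pow, one_pow]
    field_simp
    simp_rw [mul_comm (1 - Real.exp t)]
  have hfin := ((hT1.mul hT2).congr' heq.symm)
  rw [mul_one] at hfin
  exact hfin
end

section
/- Let A, B > 0 and p > B. Suppose ν : (-∞,0] → ℝ₊ is increasing with e^{-Bt}ν(t) → A as t → -∞, and define II(t) := e^{-Bt} ∫_t^0 e^{-p(s-t)} dν(s). Then there exists a sequence t_j → -∞ along which II(t_j) converges to a limit at most AB/(p-B). -/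
open Filter MeasureTheory Real
open Set ENNReal

lemma inner_exp (p : ℝ) (hp : 0 < p) (s : ℝ) (hs : s ≤ 0) :
    ∫ u in Set.Ioc s 0, p * Real.exp (-p*u) = Real.exp (-p*s) - 1 := by
  rw [← intervalIntegral.integral_of_le hs]
  have : ∀ u ∈ Set.uIcc s 0, HasDerivAt (fun u => -Real.exp (-p*u)) (p * Real.exp (-p*u)) u := by
    intro u _
    have h := ((Real.hasDerivAt_exp (-p*u)).comp u ((hasDerivAt_id u).const_mul (-p)))
    have h2 := h.neg
    exact h2.congr_deriv (by ring)
  rw [intervalIntegral.integral_eq_sub_of_hasDerivAt this]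
  · simp [Real.exp_zero]; ring
  · exact (continuous_const.mul ((Real.continuous_exp.comp (continuous_const.mul continuous_id)))).intervalIntegrable _ _

lemma inner_lint (p : ℝ) (hp : 0 < p) (s : ℝ) (hs : s ≤ 0) :
    ENNReal.ofReal (Real.exp (-p*s))
      = 1 + ∫⁻ u in Set.Ioc s 0, ENNReal.ofReal (p * Real.exp (-p*u)) := by
  have hcont : Continuous fun u : ℝ => p * Real.exp (-p*u) :=
    continuous_const.mul (Real.continuous_exp.comp (continuous_const.mul continuous_id))
  have hint : IntegrableOn (fun u => p * Real.exp (-p*u)) (Set.Ioc s 0) volume :=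
    hcont.integrableOn_Ioc
  have hnn : 0 ≤ᵐ[volume.restrict (Set.Ioc s 0)] fun u => p * Real.exp (-p*u) :=
    Filter.Eventually.of_forall fun u => by positivity
  rw [← MeasureTheory.ofReal_integral_eq_lintegral_ofReal hint hnn, inner_exp p hp s hs]
  have h1 : (1:ℝ) ≤ Real.exp (-p*s) := by
    rw [← Real.exp_zero]; apply Real.exp_le_exp.2; nlinarith
  rw [← ENNReal.ofReal_one, ← ENNReal.ofReal_add (by norm_num) (by linarith)]
  ring_nf

lemma swap_lemma (ν : StieltjesFunction ℝ) (p t : ℝ) (hp : 0 < p) (ht : t ≤ 0) :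
    ∫⁻ s in Set.Ioc t 0, (∫⁻ u in Set.Ioc s 0, ENNReal.ofReal (p * Real.exp (-p*u))) ∂ν.measure
      = ∫⁻ u in Set.Ioc t 0, ENNReal.ofReal (p * Real.exp (-p*u)) * ν.measure (Set.Ioo t u) := by
  set g : ℝ → ℝ≥0∞ := fun u => ENNReal.ofReal (p * Real.exp (-p*u)) with hg
  set S : Set (ℝ × ℝ) := {q | t < q.1 ∧ q.1 < q.2 ∧ q.2 ≤ 0} with hS
  have hSm : MeasurableSet S := by
    apply MeasurableSet.inter (measurableSet_lt measurable_const measurable_fst)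
    exact MeasurableSet.inter (measurableSet_lt measurable_fst measurable_snd)
      (measurableSet_le measurable_snd measurable_const)
  set F : ℝ → ℝ → ℝ≥0∞ := fun s u => S.indicator (fun q => g q.2) (s, u) with hF
  have hgm : Measurable g := by
    apply Measurable.ennreal_ofReal
    exact (continuous_const.mul (Real.continuous_exp.comp
      (continuous_const.mul continuous_id))).measurable
  have hFm : Measurable (Function.uncurry F) := by
    have : Function.uncurry F = S.indicator (fun q => g q.2) := by
      funext q; cases q; rfl
    rw [this]
    exact (hgm.comp measurable_snd).indicator hSm
  have step1 : ∫⁻ s in Set.Ioc t 0, (∫⁻ u in Set.Ioc s 0, g u) ∂ν.measure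
      = ∫⁻ s, ∫⁻ u, F s u ∂volume ∂ν.measure := by
    rw [← lintegral_indicator measurableSet_Ioc]
    congr 1; funext s
    by_cases hs : s ∈ Set.Ioc t 0
    · rw [Set.indicator_of_mem hs]
      have heq : ∀ u, F s u = (Set.Ioc s 0).indicator g u := by
        intro u
        show S.indicator (fun q => g q.2) (s, u) = _
        by_cases hu : u ∈ Set.Ioc s 0
        · rw [Set.indicator_of_mem (show (s,u) ∈ S from ⟨hs.1, hu.1, hu.2⟩),
            Set.indicator_of_mem hu]
        · rw [Set.indicator_of_notMem (show (s,u) ∉ S from fun hq => hu ⟨hq.2.1, hq.2.2⟩),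
            Set.indicator_of_notMem hu]
      simp_rw [heq]
      rw [lintegral_indicator measurableSet_Ioc]
    · rw [Set.indicator_of_notMem hs]
      have heq : ∀ u, F s u = 0 := by
        intro u
        show S.indicator (fun q => g q.2) (s, u) = 0
        exact Set.indicator_of_notMem
          (fun hq => hs ⟨hq.1, le_of_lt (lt_of_lt_of_le hq.2.1 hq.2.2)⟩) _
      simp [heq]
  have step2 : ∫⁻ s, ∫⁻ u, F s u ∂volume ∂ν.measure
      = ∫⁻ u, ∫⁻ s, F s u ∂ν.measure ∂volume :=
    lintegral_lintegral_swap hFm.aemeasurable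
  have step3 : ∀ u, (∫⁻ s, F s u ∂ν.measure)
      = (Set.Ioc t 0).indicator (fun u => g u * ν.measure (Set.Ioo t u)) u := by
    intro u
    by_cases hu : u ∈ Set.Ioc t 0
    · rw [Set.indicator_of_mem hu]
      have heq : ∀ s, F s u = (Set.Ioo t u).indicator (fun _ => g u) s := by
        intro s
        show S.indicator (fun q => g q.2) (s, u) = _
        by_cases hsu : s ∈ Set.Ioo t u
        · rw [Set.indicator_of_mem (show (s,u) ∈ S from ⟨hsu.1, hsu.2, hu.2⟩),
            Set.indicator_of_mem hsu]
        · rw [Set.indicator_of_notMem (show (s,u) ∉ S from fun hq => hsu ⟨hq.1, hq.2.1⟩),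
            Set.indicator_of_notMem hsu]
      simp_rw [heq]
      rw [lintegral_indicator measurableSet_Ioo, setLIntegral_const]
    · rw [Set.indicator_of_notMem hu]
      have heq : ∀ s, F s u = 0 := by
        intro s
        show S.indicator (fun q => g q.2) (s, u) = 0
        apply Set.indicator_of_notMem
        rintro ⟨h1, h2, h3⟩
        rcases not_and_or.mp (fun hc : t < u ∧ u ≤ 0 => hu ⟨hc.1, hc.2⟩) with h | h
        · exact h (lt_trans h1 h2)
        · exact h h3
      simp [heq]
  rw [step1, step2]
  simp_rw [step3]
  rw [lintegral_indicator measurableSet_Ioc]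

lemma nu_meas_cont : ∀ (ν : StieltjesFunction ℝ), Monotone ν := fun ν => ν.mono

lemma ibp (ν : StieltjesFunction ℝ) (p t : ℝ) (hp : 0 < p) (ht : t ≤ 0) :
    ∫ s in Set.Ioc t 0, Real.exp (-p*s) ∂ν.measure
      = (ν 0 - ν t) + ∫ u in Set.Ioc t 0, p * Real.exp (-p*u) * (ν u - ν t) := by
  have hνt0 : ν t ≤ ν 0 := ν.mono ht
  have hcontg : Continuous fun u : ℝ => p * Real.exp (-p*u) :=
    continuous_const.mul (Real.continuous_exp.comp (continuous_const.mul continuous_id))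
  have hconte : Continuous fun s : ℝ => Real.exp (-p*s) :=
    Real.continuous_exp.comp (continuous_const.mul continuous_id)
  have hfin : ν.measure (Set.Ioc t 0) ≠ ⊤ := by
    rw [ν.measure_Ioc]; exact ENNReal.ofReal_ne_top
  -- integrability of exp wrt ν.measure on Ioc t 0
  have hint1 : IntegrableOn (fun s => Real.exp (-p*s)) (Set.Ioc t 0) ν.measure := by
    apply Measure.integrableOn_of_bounded (M := Real.exp (-p*t)) hfin
      hconte.aestronglyMeasurable
    filter_upwards [ae_restrict_mem measurableSet_Ioc] with s hs
    rw [Real.norm_eq_abs, abs_of_pos (Real.exp_pos _)]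
    exact Real.exp_le_exp.2 (by nlinarith [hs.1])
  -- integrability of the parts integrand wrt volume
  have hνmble : Measurable fun u : ℝ => ν u := ν.mono.measurable
  have hint2 : IntegrableOn (fun u => p * Real.exp (-p*u) * (ν u - ν t))
      (Set.Ioc t 0) volume := by
    apply Measure.integrableOn_of_bounded (M := p * Real.exp (-p*t) * (ν 0 - ν t))
    · rw [Real.volume_Ioc]; exact ENNReal.ofReal_ne_top
    · exact (hcontg.measurable.mul (hνmble.sub measurable_const)).aestronglyMeasurable
    · filter_upwards [ae_restrict_mem measurableSet_Ioc] with u hu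
      have h1 : 0 ≤ ν u - ν t := sub_nonneg.2 (ν.mono hu.1.le)
      rw [Real.norm_eq_abs, abs_of_nonneg (by positivity)]
      have h2 : Real.exp (-p*u) ≤ Real.exp (-p*t) := Real.exp_le_exp.2 (by nlinarith [hu.1])
      have h3 : ν u - ν t ≤ ν 0 - ν t := by have := ν.mono hu.2; linarith
      exact mul_le_mul (mul_le_mul_of_nonneg_left h2 hp.le) h3 h1 (by positivity)
  have hK0 : 0 ≤ ∫ u in Set.Ioc t 0, p * Real.exp (-p*u) * (ν u - ν t) := by
    apply setIntegral_nonneg measurableSet_Ioc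
    intro u hu
    have h1 : 0 ≤ ν u - ν t := sub_nonneg.2 (ν.mono hu.1.le)
    positivity
  -- lintegral chain
  have e1 : ENNReal.ofReal (∫ s in Set.Ioc t 0, Real.exp (-p*s) ∂ν.measure)
      = ∫⁻ s in Set.Ioc t 0, ENNReal.ofReal (Real.exp (-p*s)) ∂ν.measure :=
    ofReal_integral_eq_lintegral_ofReal hint1
      (Filter.Eventually.of_forall fun s => (Real.exp_pos _).le)
  have e2 : ∫⁻ s in Set.Ioc t 0, ENNReal.ofReal (Real.exp (-p*s)) ∂ν.measure
      = ∫⁻ s in Set.Ioc t 0,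
          (1 + ∫⁻ u in Set.Ioc s 0, ENNReal.ofReal (p * Real.exp (-p*u))) ∂ν.measure := by
    apply setLIntegral_congr_fun measurableSet_Ioc
    exact fun s hs => inner_lint p hp s hs.2
  have e3 : ∫⁻ s in Set.Ioc t 0,
        (1 + ∫⁻ u in Set.Ioc s 0, ENNReal.ofReal (p * Real.exp (-p*u))) ∂ν.measure
      = ν.measure (Set.Ioc t 0)
        + ∫⁻ s in Set.Ioc t 0,
            (∫⁻ u in Set.Ioc s 0, ENNReal.ofReal (p * Real.exp (-p*u))) ∂ν.measure := by
    rw [lintegral_add_left measurable_const, setLIntegral_const, one_mul]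
  have e4 := swap_lemma ν p t hp ht
  -- a.e. rewrite of Ioo measure
  have hae : ∀ᵐ u ∂(volume.restrict (Set.Ioc t 0)),
      ENNReal.ofReal (p * Real.exp (-p*u)) * ν.measure (Set.Ioo t u)
        = ENNReal.ofReal (p * Real.exp (-p*u) * (ν u - ν t)) := by
    apply ae_restrict_of_ae
    filter_upwards [ν.mono.countable_not_continuousAt.ae_notMem volume] with u hu
    have hcont : ContinuousAt (fun x => ν x) u := by
      by_contra hc; exact hu hc
    have hleft : Function.leftLim ν u = ν u :=
      leftLim_eq_of_tendsto
        (hcont.tendsto.mono_left nhdsWithin_le_nhds)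
    rw [ν.measure_Ioo, hleft, ← ENNReal.ofReal_mul (by positivity)]
  have e5 : ∫⁻ u in Set.Ioc t 0, ENNReal.ofReal (p * Real.exp (-p*u)) * ν.measure (Set.Ioo t u)
      = ENNReal.ofReal (∫ u in Set.Ioc t 0, p * Real.exp (-p*u) * (ν u - ν t)) := by
    rw [lintegral_congr_ae hae]
    rw [← ofReal_integral_eq_lintegral_ofReal hint2]
    filter_upwards [ae_restrict_mem measurableSet_Ioc] with u hu
    have h1 : 0 ≤ ν u - ν t := sub_nonneg.2 (ν.mono hu.1.le)
    positivity
  have key : ENNReal.ofReal (∫ s in Set.Ioc t 0, Real.exp (-p*s) ∂ν.measure)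
      = ENNReal.ofReal ((ν 0 - ν t) + ∫ u in Set.Ioc t 0, p * Real.exp (-p*u) * (ν u - ν t)) := by
    rw [e1, e2, e3, e4, e5, ν.measure_Ioc, ← ENNReal.ofReal_add (by linarith) hK0]
  have hL0 : 0 ≤ ∫ s in Set.Ioc t 0, Real.exp (-p*s) ∂ν.measure :=
    setIntegral_nonneg measurableSet_Ioc fun s _ => (Real.exp_pos _).le
  exact (ENNReal.ofReal_eq_ofReal_iff hL0 (by linarith)).mp key

lemma II_eq (ν : StieltjesFunction ℝ) (B p t : ℝ) (hp : 0 < p) (ht : t ≤ 0) :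
    Real.exp (-B*t) * ∫ s in Set.Ioc t 0, Real.exp (-p*(s-t)) ∂ν.measure
      = Real.exp ((p-B)*t) * ν 0 - Real.exp (-B*t) * ν t
        + Real.exp ((p-B)*t) * ∫ u in Set.Ioc t 0, p * Real.exp (-p*u) * ν u := by
  have hcontg : Continuous fun u : ℝ => p * Real.exp (-p*u) :=
    continuous_const.mul (Real.continuous_exp.comp (continuous_const.mul continuous_id))
  have hνmble : Measurable fun u : ℝ => ν u := ν.mono.measurable
  have hpull : ∀ s : ℝ, Real.exp (-p*(s-t)) = Real.exp (p*t) * Real.exp (-p*s) := by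
    intro s; rw [← Real.exp_add]; ring_nf
  have h1 : ∫ s in Set.Ioc t 0, Real.exp (-p*(s-t)) ∂ν.measure
      = Real.exp (p*t) * ∫ s in Set.Ioc t 0, Real.exp (-p*s) ∂ν.measure := by
    simp_rw [hpull]; exact integral_const_mul _ _
  have hintA : IntegrableOn (fun u => p * Real.exp (-p*u) * ν u) (Set.Ioc t 0) volume := by
    apply Measure.integrableOn_of_bounded (M := p * Real.exp (-p*t) * (|ν t| + |ν 0|))
    · rw [Real.volume_Ioc]; exact ENNReal.ofReal_ne_top
    · exact (hcontg.measurable.mul hνmble).aestronglyMeasurable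
    · filter_upwards [ae_restrict_mem measurableSet_Ioc] with u hu
      have h2 : Real.exp (-p*u) ≤ Real.exp (-p*t) := Real.exp_le_exp.2 (by nlinarith [hu.1])
      have h3 : |ν u| ≤ |ν t| + |ν 0| := by
        rcases abs_le.mp (le_refl |ν u|) with _
        have hl := ν.mono hu.1.le
        have hr := ν.mono hu.2
        rw [abs_le]
        constructor
        · have := neg_abs_le (ν t); linarith [neg_abs_le (ν 0), abs_nonneg (ν 0)]
        · linarith [le_abs_self (ν 0), abs_nonneg (ν t)]
      rw [norm_mul, norm_mul, Real.norm_eq_abs, Real.norm_eq_abs, Real.norm_eq_abs,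
        abs_of_pos hp, abs_of_pos (Real.exp_pos _)]
      have hnn : (0:ℝ) ≤ p * Real.exp (-p*u) := by positivity
      calc p * Real.exp (-p*u) * |ν u| ≤ p * Real.exp (-p*t) * |ν u| := by
            apply mul_le_mul_of_nonneg_right _ (abs_nonneg _)
            exact mul_le_mul_of_nonneg_left h2 hp.le
        _ ≤ p * Real.exp (-p*t) * (|ν t| + |ν 0|) := by
            apply mul_le_mul_of_nonneg_left h3 (by positivity)
  have hintB : IntegrableOn (fun u => p * Real.exp (-p*u) * ν t) (Set.Ioc t 0) volume :=
    (hcontg.mul continuous_const).integrableOn_Ioc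
  have h2 : ∫ u in Set.Ioc t 0, p * Real.exp (-p*u) * (ν u - ν t)
      = (∫ u in Set.Ioc t 0, p * Real.exp (-p*u) * ν u)
        - (Real.exp (-p*t) - 1) * ν t := by
    have : (fun u => p * Real.exp (-p*u) * (ν u - ν t))
        = fun u => p * Real.exp (-p*u) * ν u - p * Real.exp (-p*u) * ν t := by
      funext u; ring
    rw [this, integral_sub hintA hintB]
    congr 1
    rw [integral_mul_const, inner_exp p hp t ht]
  rw [h1, ibp ν p t hp ht, h2]
  have hab : Real.exp ((p-B)*t) = Real.exp (p*t) * Real.exp (-B*t) := by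
    rw [← Real.exp_add]; ring_nf
  have hbc : Real.exp (p*t) * Real.exp (-p*t) = 1 := by
    rw [← Real.exp_add]; ring_nf; exact Real.exp_zero
  rw [hab]
  linear_combination (-(Real.exp (-B*t) * (ν t))) * hbc

lemma expint (q a b : ℝ) (hab : a ≤ b) :
    ∫ u in Set.Ioc a b, q * Real.exp (-q*u) = Real.exp (-q*a) - Real.exp (-q*b) := by
  rw [← intervalIntegral.integral_of_le hab]
  have hd : ∀ u ∈ Set.uIcc a b, HasDerivAt (fun u => -Real.exp (-q*u)) (q * Real.exp (-q*u)) u := by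
    intro u _
    have h := ((Real.hasDerivAt_exp (-q*u)).comp u ((hasDerivAt_id u).const_mul (-q))).neg
    exact h.congr_deriv (by ring)
  rw [intervalIntegral.integral_eq_sub_of_hasDerivAt hd]
  · ring
  · exact (continuous_const.mul ((Real.continuous_exp.comp
      (continuous_const.mul continuous_id)))).intervalIntegrable _ _

lemma intA (ν : StieltjesFunction ℝ) (p a b : ℝ) (hp : 0 < p) :
    IntegrableOn (fun u => p * Real.exp (-p*u) * ν u) (Set.Ioc a b) volume := by
  have hcontg : Continuous fun u : ℝ => p * Real.exp (-p*u) :=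
    continuous_const.mul (Real.continuous_exp.comp (continuous_const.mul continuous_id))
  apply Measure.integrableOn_of_bounded (M := p * Real.exp (-p*a) * (|ν a| + |ν b|))
  · rw [Real.volume_Ioc]; exact ENNReal.ofReal_ne_top
  · exact (hcontg.measurable.mul ν.mono.measurable).aestronglyMeasurable
  · filter_upwards [ae_restrict_mem measurableSet_Ioc] with u hu
    have h2 : Real.exp (-p*u) ≤ Real.exp (-p*a) := Real.exp_le_exp.2 (by nlinarith [hu.1])
    have hl := ν.mono hu.1.le
    have hr := ν.mono hu.2
    have h3 : |ν u| ≤ |ν a| + |ν b| := by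
      rw [abs_le]
      constructor
      · linarith [neg_abs_le (ν a), abs_nonneg (ν b)]
      · linarith [le_abs_self (ν b), abs_nonneg (ν a)]
    rw [norm_mul, norm_mul, Real.norm_eq_abs, Real.norm_eq_abs, Real.norm_eq_abs,
      abs_of_pos hp, abs_of_pos (Real.exp_pos _)]
    calc p * Real.exp (-p*u) * |ν u| ≤ p * Real.exp (-p*a) * |ν u| :=
          mul_le_mul_of_nonneg_right (mul_le_mul_of_nonneg_left h2 hp.le) (abs_nonneg _)
      _ ≤ p * Real.exp (-p*a) * (|ν a| + |ν b|) :=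
          mul_le_mul_of_nonneg_left h3 (by positivity)

lemma keylim (ν : StieltjesFunction ℝ) (A B p : ℝ) (hA : 0 < A) (hB : 0 < B) (hp : B < p)
    (hlim : Tendsto (fun t : ℝ => Real.exp (-B * t) * ν t) atBot (nhds A)) :
    Tendsto (fun t : ℝ => Real.exp ((p-B)*t) * ∫ u in Set.Ioc t 0, p * Real.exp (-p*u) * ν u)
      atBot (nhds (p * A / (p - B))) := by
  have hq : 0 < p - B := by linarith
  have hp0 : 0 < p := by linarith
  rw [Metric.tendsto_nhds]
  intro ε hε
  obtain ⟨δ, hδdef⟩ : ∃ δ : ℝ, δ = ε * (p - B) / (3 * p) := ⟨_, rfl⟩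
  have hδ : 0 < δ := by rw [hδdef]; positivity
  -- find T₀
  have hev : ∀ᶠ u in atBot, |Real.exp (-B*u) * ν u - A| < δ := by
    have := Metric.tendsto_nhds.mp hlim δ hδ
    simpa [Real.dist_eq] using this
  rw [eventually_atBot] at hev
  obtain ⟨T₀', hT₀'⟩ := hev
  obtain ⟨T₀, hT₀def⟩ : ∃ T₀ : ℝ, T₀ = min T₀' 0 := ⟨_, rfl⟩
  have hT₀0 : T₀ ≤ 0 := hT₀def ▸ min_le_right _ _
  have hT₀ : ∀ u ≤ T₀, |Real.exp (-B*u) * ν u - A| ≤ δ :=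
    fun u hu => (hT₀' u (hu.trans (hT₀def ▸ min_le_left _ _))).le
  obtain ⟨C, hCdef⟩ : ∃ C : ℝ, C = ∫ u in Set.Ioc T₀ 0, p * Real.exp (-p*u) * ν u := ⟨_, rfl⟩
  obtain ⟨M, hMdef⟩ : ∃ M : ℝ, M = |C| + A * (p/(p-B)) * Real.exp (-(p-B)*T₀) := ⟨_, rfl⟩
  have hM : 0 ≤ M := by rw [hMdef]; positivity
  -- eventual smallness of exp((p-B)t) * (M+1)
  have hexplim : Tendsto (fun t : ℝ => Real.exp ((p-B)*t) * (M+1)) atBot (nhds 0) := by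
    have h1 : Tendsto (fun t : ℝ => (p-B)*t) atBot atBot :=
      Tendsto.const_mul_atBot hq tendsto_id
    have h2 : Tendsto (fun t : ℝ => Real.exp ((p-B)*t)) atBot (nhds 0) :=
      Real.tendsto_exp_atBot.comp h1
    simpa using h2.mul_const (M+1)
  have hev2 : ∀ᶠ t in atBot, Real.exp ((p-B)*t) * (M+1) < ε/3 :=
    hexplim.eventually (gt_mem_nhds (by positivity))
  filter_upwards [eventually_le_atBot T₀, hev2] with t ht hexp
  -- split the integral
  have hν := intA ν p
  obtain ⟨J', hJ'def⟩ : ∃ J' : ℝ, J' = ∫ u in Set.Ioc t T₀, p * Real.exp (-p*u) * ν u := ⟨_, rfl⟩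
  have hsplit : (∫ u in Set.Ioc t 0, p * Real.exp (-p*u) * ν u) = J' + C := by
    rw [hJ'def, hCdef, ← setIntegral_union (Set.Ioc_disjoint_Ioc_of_le le_rfl) measurableSet_Ioc
      (hν t T₀ hp0) (hν T₀ 0 hp0), Set.Ioc_union_Ioc_eq_Ioc ht hT₀0]
  obtain ⟨D, hDdef⟩ : ∃ D : ℝ, D = ∫ u in Set.Ioc t T₀, p * Real.exp (-(p-B)*u) := ⟨_, rfl⟩
  have hcontD : Continuous fun u : ℝ => p * Real.exp (-(p-B)*u) :=
    continuous_const.mul (Real.continuous_exp.comp (continuous_const.mul continuous_id))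
  have hintD : IntegrableOn (fun u => p * Real.exp (-(p-B)*u)) (Set.Ioc t T₀) volume :=
    hcontD.integrableOn_Ioc
  -- |J' - A * D| ≤ δ * D
  have hb1 : |J' - A * D| ≤ δ * D := by
    have hAD : A * D = ∫ u in Set.Ioc t T₀, A * (p * Real.exp (-(p-B)*u)) := by
      rw [hDdef]; exact (integral_const_mul A _).symm
    have hsub : J' - A * D
        = ∫ u in Set.Ioc t T₀, (p * Real.exp (-p*u) * ν u - A * (p * Real.exp (-(p-B)*u))) := by
      rw [hAD, hJ'def, ← integral_sub (hν t T₀ hp0) (hintD.const_mul A)]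
    rw [hsub]
    have habs : |∫ u in Set.Ioc t T₀,
          (p * Real.exp (-p*u) * ν u - A * (p * Real.exp (-(p-B)*u)))|
        ≤ ∫ u in Set.Ioc t T₀,
            |p * Real.exp (-p*u) * ν u - A * (p * Real.exp (-(p-B)*u))| := by
      have := norm_integral_le_integral_norm (μ := volume.restrict (Set.Ioc t T₀))
        (f := fun u => p * Real.exp (-p*u) * ν u - A * (p * Real.exp (-(p-B)*u)))
      simpa [Real.norm_eq_abs] using this
    refine habs.trans ?_
    have hδD : δ * D = ∫ u in Set.Ioc t T₀, δ * (p * Real.exp (-(p-B)*u)) := by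
      rw [hDdef]; exact (integral_const_mul δ _).symm
    rw [hδD]
    have hintsub : IntegrableOn
        (fun u => |p * Real.exp (-p*u) * ν u - A * (p * Real.exp (-(p-B)*u))|)
        (Set.Ioc t T₀) volume := ((hν t T₀ hp0).sub (hintD.const_mul A)).abs
    apply setIntegral_mono_on hintsub (hintD.const_mul δ) measurableSet_Ioc
    intro u hu
    have hee : Real.exp (-(p-B)*u) * Real.exp (-B*u) = Real.exp (-p*u) := by
      rw [← Real.exp_add]; ring_nf
    have hfu : p * Real.exp (-p*u) * ν u - A * (p * Real.exp (-(p-B)*u))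
        = (p * Real.exp (-(p-B)*u)) * (Real.exp (-B*u) * ν u - A) := by
      linear_combination (-(p * (ν u : ℝ))) * hee
    rw [hfu, abs_mul, abs_of_pos (by positivity : (0:ℝ) < p * Real.exp (-(p-B)*u)), mul_comm δ]
    exact mul_le_mul_of_nonneg_left (hT₀ u hu.2) (by positivity)
  -- value of D
  have hDval : D = (p/(p-B)) * (Real.exp (-(p-B)*t) - Real.exp (-(p-B)*T₀)) := by
    have hh : ∀ u : ℝ, p * Real.exp (-(p-B)*u) = (p/(p-B)) * ((p-B) * Real.exp (-(p-B)*u)) := by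
      intro u; field_simp
    rw [hDdef]
    simp_rw [hh]
    rw [integral_const_mul, expint (p-B) t T₀ ht]
  have hone : Real.exp ((p-B)*t) * Real.exp (-(p-B)*t) = 1 := by
    rw [← Real.exp_add]; ring_nf; exact Real.exp_zero
  have hDet : Real.exp ((p-B)*t) * D
      = (p/(p-B)) * (1 - Real.exp ((p-B)*t) * Real.exp (-(p-B)*T₀)) := by
    rw [hDval]
    linear_combination (p/(p-B)) * hone
  have hDnn : 0 ≤ D := by
    rw [hDval]
    have h5 : Real.exp (-(p-B)*T₀) ≤ Real.exp (-(p-B)*t) := Real.exp_le_exp.2 (by nlinarith)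
    have hpq : 0 ≤ p/(p-B) := by positivity
    nlinarith
  have hb2 : Real.exp ((p-B)*t) * D ≤ p/(p-B) := by
    rw [hDet]
    nlinarith [mul_pos (Real.exp_pos ((p-B)*t)) (Real.exp_pos (-(p-B)*T₀)),
      (by positivity : (0:ℝ) < p/(p-B))]
  have hb3 : p/(p-B) - Real.exp ((p-B)*t) * D
      = (p/(p-B)) * Real.exp (-(p-B)*T₀) * Real.exp ((p-B)*t) := by
    rw [hDet]; ring
  -- final estimate
  rw [Real.dist_eq, hsplit]
  have hdecomp : Real.exp ((p-B)*t) * (J' + C) - p * A / (p-B)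
      = Real.exp ((p-B)*t) * (J' - A * D) + (Real.exp ((p-B)*t) * C
        + A * (Real.exp ((p-B)*t) * D - p/(p-B))) := by
    field_simp
    ring
  rw [hdecomp]
  have et := Real.exp_pos ((p-B)*t)
  have h1 : |Real.exp ((p-B)*t) * (J' - A * D)| ≤ ε/3 := by
    rw [abs_mul, abs_of_pos et]
    have h2 : Real.exp ((p-B)*t) * |J' - A * D| ≤ Real.exp ((p-B)*t) * (δ * D) :=
      mul_le_mul_of_nonneg_left hb1 et.le
    refine h2.trans ?_
    have h3 : Real.exp ((p-B)*t) * (δ * D) = δ * (Real.exp ((p-B)*t) * D) := by ring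
    rw [h3]
    have h4 : δ * (Real.exp ((p-B)*t) * D) ≤ δ * (p/(p-B)) :=
      mul_le_mul_of_nonneg_left hb2 hδ.le
    refine h4.trans_eq ?_
    rw [hδdef]
    field_simp
  have h4 : |Real.exp ((p-B)*t) * C + A * (Real.exp ((p-B)*t) * D - p/(p-B))|
      ≤ Real.exp ((p-B)*t) * M := by
    refine (abs_add_le _ _).trans ?_
    have h5 : |Real.exp ((p-B)*t) * C| = Real.exp ((p-B)*t) * |C| := by
      rw [abs_mul, abs_of_pos et]
    have h6 : |A * (Real.exp ((p-B)*t) * D - p/(p-B))|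
        = A * (p/(p-B) - Real.exp ((p-B)*t) * D) := by
      rw [abs_mul, abs_of_pos hA, abs_of_nonpos (by linarith), neg_sub]
    rw [h5, h6, hb3, hMdef]
    exact le_of_eq (by ring)
  have h7 : Real.exp ((p-B)*t) * M < ε/3 := by
    have h8 : Real.exp ((p-B)*t) * (M+1)
        = Real.exp ((p-B)*t) * M + Real.exp ((p-B)*t) := by ring
    linarith
  calc |Real.exp ((p-B)*t) * (J' - A * D) + (Real.exp ((p-B)*t) * C
        + A * (Real.exp ((p-B)*t) * D - p/(p-B)))|
      ≤ |Real.exp ((p-B)*t) * (J' - A * D)|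
        + |Real.exp ((p-B)*t) * C + A * (Real.exp ((p-B)*t) * D - p/(p-B))| := abs_add_le _ _
    _ < ε := by linarith


/-- Sequence extraction from the calculus lemma: if `ν` is increasing, positive on the
negative axis, with `e^{-Bt} ν(t) → A` as `t → -∞`, and
`II(t) = e^{-Bt} ∫_t^0 e^{-p(s-t)} dν(s)`, then there is a sequence `t_j → -∞`
along which `II(t_j)` converges to a limit at most `AB/(p-B)`. -/
theorem calculus_lemma_seq (ν : StieltjesFunction ℝ) (A B p : ℝ)
    (hA : 0 < A) (hB : 0 < B) (hp : B < p)
    (hpos : ∀ t < (0 : ℝ), 0 < ν t)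
    (hlim : Tendsto (fun t : ℝ => Real.exp (-B * t) * ν t) atBot (nhds A)) :
    ∃ tj : ℕ → ℝ, Tendsto tj atTop atBot ∧
      ∃ l ≤ A * B / (p - B),
        Tendsto
          (fun j : ℕ =>
            Real.exp (-B * tj j) *
              ∫ s in Set.Ioc (tj j) 0, Real.exp (-p * (s - tj j)) ∂ν.measure)
          atTop (nhds l) := by
  have hq : 0 < p - B := by linarith
  have hp0 : 0 < p := by linarith
  -- global limit as t → -∞
  have h1 : Tendsto (fun t : ℝ => (p-B)*t) atBot atBot :=
    Tendsto.const_mul_atBot hq tendsto_id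
  have t1 : Tendsto (fun t : ℝ => Real.exp ((p-B)*t) * ν 0) atBot (nhds 0) := by
    have h2 : Tendsto (fun t : ℝ => Real.exp ((p-B)*t)) atBot (nhds 0) :=
      Real.tendsto_exp_atBot.comp h1
    simpa using h2.mul_const (ν 0)
  have t3 := keylim ν A B p hA hB hp hlim
  have hF : Tendsto (fun t : ℝ => Real.exp ((p-B)*t) * ν 0 - Real.exp (-B*t) * ν t
      + Real.exp ((p-B)*t) * ∫ u in Set.Ioc t 0, p * Real.exp (-p*u) * ν u)
      atBot (nhds (0 - A + p * A / (p - B))) :=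
    (t1.sub hlim).add t3
  have hval : 0 - A + p * A / (p - B) = A * B / (p - B) := by
    field_simp
    ring
  rw [hval] at hF
  have hII : Tendsto (fun t : ℝ => Real.exp (-B*t)
      * ∫ s in Set.Ioc t 0, Real.exp (-p*(s-t)) ∂ν.measure) atBot (nhds (A * B / (p - B))) := by
    apply hF.congr'
    filter_upwards [eventually_le_atBot (0:ℝ)] with t ht
    exact (II_eq ν B p t hp0 ht).symm
  have htj : Tendsto (fun j : ℕ => -(j:ℝ)) atTop atBot :=
    tendsto_neg_atBot_iff.mpr tendsto_natCast_atTop_atTop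
  exact ⟨fun j => -(j:ℝ), htj, A * B / (p - B), le_refl _, hII.comp htj⟩
end

section
/- Let μ be a finite measure on a space X and u : X → [-∞, 0] measurable with μ({u = -∞}) = 0. Define ν(t) := μ({u ≤ t}) for t < 0 and suppose e^{-kt} ν(t) → c as t → -∞ for some constants k > 0 and c ≥ 0. Then for any δ > 0, liminf_{t→-∞} e^{-kt} ∫_{{u > t}} e^{(k+δ)(t - u)} dμ ≤ ck/δ. -/
open MeasureTheory Filter Real

/-- If `μ` is finite, `u : X → [-∞,0]` with `μ({u = -∞}) = 0`,
`ν(t) = μ({u ≤ t})` satisfies `e^{-kt} ν(t) → c` as `t → -∞`, then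
`liminf_{t→-∞} e^{-kt} ∫_{u > t} e^{(k+δ)(t-u)} dμ ≤ ck/δ`. -/
theorem liminf_tail_integral (X : Type*) [MeasurableSpace X] (μ : Measure X)
    [IsFiniteMeasure μ] (u : X → EReal) (hu : Measurable u)
    (hu0 : ∀ x, u x ≤ 0) (hbot : μ {x | u x = ⊥} = 0)
    (k δ c : ℝ) (hk : 0 < k) (hδ : 0 < δ) (hc : 0 ≤ c)
    (hν : Tendsto (fun t : ℝ =>
        Real.exp (-k * t) * (μ {x | u x ≤ (t : EReal)}).toReal) atBot (nhds c)) :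
    Filter.liminf
      (fun t : ℝ =>
        Real.exp (-k * t) *
          (∫⁻ x in {x | (t : EReal) < u x},
            ENNReal.ofReal (Real.exp ((k + δ) * (t - (u x).toReal))) ∂μ).toReal)
      atBot ≤ c * k / δ := by
  have hkδ : 0 < k + δ := by linarith
  set a : ℝ := k / (k + δ) with ha_def
  have ha0 : 0 < a := div_pos hk hkδ
  have ha1 : a < 1 := (div_lt_one hkδ).2 (by linarith)
  set N : ℝ → ℝ := fun t => (μ {x | u x ≤ (t : EReal)}).toReal with hN_def
  have hNmono : Monotone N := by
    intro t₁ t₂ h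
    refine ENNReal.toReal_mono (measure_ne_top μ _) (measure_mono fun x hx => ?_)
    simp only [Set.mem_setOf_eq] at hx ⊢
    exact le_trans hx (by exact_mod_cast h)
  have hNmeas : Measurable N := hNmono.measurable
  have hN0 : ∀ t, 0 ≤ N t := fun _ => ENNReal.toReal_nonneg
  set C : ℝ := (μ Set.univ).toReal with hC_def
  have hNbd : ∀ t, N t ≤ C := fun t =>
    ENNReal.toReal_mono (measure_ne_top μ _) (measure_mono (Set.subset_univ _))
  set g : ℝ → ℝ := fun t => Real.exp (-k * t) * N t with hg_def
  have hg0 : ∀ t, 0 ≤ g t := fun t => mul_nonneg (Real.exp_pos _).le (hN0 t)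
  have hgc : Tendsto g atBot (nhds c) := hν
  -- a global bound `M` on `g`
  obtain ⟨T, hT⟩ : ∃ T : ℝ, ∀ t ≤ T, g t ≤ c + 1 := by
    have h1 : ∀ᶠ t in atBot, g t < c + 1 :=
      hgc.eventually_lt_const (by linarith)
    rcases eventually_atBot.1 h1 with ⟨T, hT⟩
    exact ⟨T, fun t ht => (hT t ht).le⟩
  set M : ℝ := max (c + 1) (Real.exp (-k * T) * C) with hM_def
  have hgM : ∀ t, g t ≤ M := by
    intro t
    rcases le_total t T with h | h
    · exact (hT t h).trans (le_max_left _ _)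
    · refine le_trans ?_ (le_max_right _ _)
      have h1 : Real.exp (-k * t) ≤ Real.exp (-k * T) :=
        Real.exp_le_exp.2 (by nlinarith)
      exact mul_le_mul h1 (hNbd t) (hN0 t) (Real.exp_pos _).le
  set r : ℝ → ℝ := fun s => -Real.log s / (k + δ) with hr_def
  have hrpos : ∀ s ∈ Set.Ioo (0:ℝ) 1, 0 < r s := by
    intro s hs
    have := Real.log_neg hs.1 hs.2
    rw [hr_def]
    exact div_pos (by linarith) hkδ
  have hrmeas : Measurable r := Real.measurable_log.neg.div_const _
  -- key exponential identity
  have hkey : ∀ t : ℝ, ∀ s ∈ Set.Ioo (0:ℝ) 1,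
      Real.exp (-k * t) * N (t + r s) = s ^ (-a) * g (t + r s) := by
    intro t s hs
    have h1 : s ^ (-a) = Real.exp (Real.log s * (-a)) := Real.rpow_def_of_pos hs.1 _
    have h2 : Real.exp (-k * t)
        = Real.exp (Real.log s * (-a)) * Real.exp (-k * (t + r s)) := by
      rw [← Real.exp_add]
      congr 1
      rw [hr_def, ha_def]
      field_simp
      ring
    rw [hg_def, h1, h2]
    ring
  have hmeas2 : ∀ t : ℝ, Measurable fun s => N (t + r s) :=
    fun t => hNmeas.comp (measurable_const.add hrmeas)
  have hintN : ∀ t : ℝ, IntegrableOn (fun s => N (t + r s)) (Set.Ioo (0:ℝ) 1) := by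
    intro t
    refine Integrable.mono' (integrable_const C) (hmeas2 t).aestronglyMeasurable ?_
    refine ae_restrict_of_forall_mem measurableSet_Ioo fun s _ => ?_
    rw [Real.norm_eq_abs, abs_of_nonneg (hN0 _)]
    exact hNbd _
  -- facts on the set {t < u}
  have hureal : ∀ t : ℝ, ∀ x, (t : EReal) < u x →
      u x = ((u x).toReal : EReal) ∧ t < (u x).toReal := by
    intro t x hx
    have htop : u x ≠ ⊤ := by
      intro h; have h0 := hu0 x; rw [h] at h0
      exact absurd h0 (by simp)
    have hbot' : u x ≠ ⊥ := by
      intro h; rw [h] at hx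
      exact absurd hx (by simp)
    refine ⟨(EReal.coe_toReal htop hbot').symm, ?_⟩
    have h2 := EReal.coe_toReal htop hbot'
    rw [← h2] at hx
    exact_mod_cast hx
  set J : ℝ → ℝ := fun t => ∫ s in Set.Ioo (0:ℝ) 1, (N (t + r s) - N t) with hJ_def
  have hsubN : ∀ t : ℝ, ∀ s ∈ Set.Ioo (0:ℝ) 1, 0 ≤ N (t + r s) - N t := by
    intro t s hs
    exact sub_nonneg.2 (hNmono (le_add_of_nonneg_right (hrpos s hs).le))
  have hintJ : ∀ t : ℝ, IntegrableOn (fun s => N (t + r s) - N t) (Set.Ioo (0:ℝ) 1) :=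
    fun t => (hintN t).sub (integrableOn_const (by simp [Real.volume_Ioo]))
  have hJ0 : ∀ t, 0 ≤ J t := fun t =>
    setIntegral_nonneg measurableSet_Ioo (hsubN t)
  -- measurability of the integrand in x
  have hfmeas : ∀ t : ℝ, Measurable fun x => Real.exp ((k + δ) * (t - (u x).toReal)) :=
    fun t => Real.measurable_exp.comp
      ((measurable_const.sub (measurable_ereal_toReal.comp hu)).const_mul _)
  -- main inequality: the tail integral is at most `ofReal (J t)`
  have hIJ : ∀ t : ℝ,
      (∫⁻ x in {x | (t : EReal) < u x},
        ENNReal.ofReal (Real.exp ((k + δ) * (t - (u x).toReal))) ∂μ)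
      ≤ ENNReal.ofReal (J t) := by
    intro t
    rw [lintegral_eq_lintegral_meas_lt _
      (Filter.Eventually.of_forall fun x => (Real.exp_pos _).le) (hfmeas t).aemeasurable]
    have h2 : ∀ s ∈ Set.Ioi (0:ℝ),
        (μ.restrict {x | (t : EReal) < u x})
            {x | s < Real.exp ((k + δ) * (t - (u x).toReal))}
          ≤ Set.indicator (Set.Ioo (0:ℝ) 1)
              (fun s => ENNReal.ofReal (N (t + r s) - N t)) s := by
      intro s hs
      rw [Measure.restrict_apply (measurableSet_lt measurable_const (hfmeas t))]
      by_cases h1s : s < 1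
      · have hsIoo : s ∈ Set.Ioo (0:ℝ) 1 := ⟨hs, h1s⟩
        rw [Set.indicator_of_mem hsIoo]
        have hsub : {x | s < Real.exp ((k + δ) * (t - (u x).toReal))}
              ∩ {x | (t : EReal) < u x}
            ⊆ {x | u x ≤ ((t + r s : ℝ) : EReal)} \ {x | u x ≤ (t : EReal)} := by
          rintro x ⟨hx1, hx2⟩
          obtain ⟨hxy, hty⟩ := hureal t x hx2
          have hlog : Real.log s < (k + δ) * (t - (u x).toReal) :=
            (Real.log_lt_iff_lt_exp hs).2 hx1
          have hyr : (u x).toReal < t + r s := by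
            have h3 : Real.log s / (k + δ) < t - (u x).toReal :=
              (div_lt_iff₀ hkδ).2 (by nlinarith)
            have h4 : r s = -(Real.log s / (k + δ)) := by rw [hr_def]; ring
            linarith
          constructor
          · show u x ≤ ((t + r s : ℝ) : EReal)
            rw [hxy]
            exact_mod_cast hyr.le
          · show ¬ u x ≤ (t : EReal)
            rw [hxy]
            exact_mod_cast not_le.2 hty
        have hsubDE : {x | u x ≤ (t : EReal)} ⊆ {x | u x ≤ ((t + r s : ℝ) : EReal)} := by
          intro x hx
          simp only [Set.mem_setOf_eq] at hx ⊢
          refine le_trans hx ?_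
          exact_mod_cast le_add_of_nonneg_right (hrpos s hsIoo).le
        have hle : μ {x | u x ≤ (t : EReal)} ≤ μ {x | u x ≤ ((t + r s : ℝ) : EReal)} :=
          measure_mono hsubDE
        calc μ ({x | s < Real.exp ((k + δ) * (t - (u x).toReal))}
                ∩ {x | (t : EReal) < u x})
            ≤ μ ({x | u x ≤ ((t + r s : ℝ) : EReal)} \ {x | u x ≤ (t : EReal)}) :=
              measure_mono hsub
          _ = μ {x | u x ≤ ((t + r s : ℝ) : EReal)} - μ {x | u x ≤ (t : EReal)} :=
              measure_diff hsubDE (hu measurableSet_Iic).nullMeasurableSet (measure_ne_top μ _)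
          _ = ENNReal.ofReal (N (t + r s) - N t) := by
              rw [← ENNReal.ofReal_toReal
                  (ENNReal.sub_ne_top (measure_ne_top μ _)),
                ENNReal.toReal_sub_of_le hle (measure_ne_top μ _)]
      · rw [Set.indicator_of_notMem (fun h => h1s h.2)]
        have hempty : {x | s < Real.exp ((k + δ) * (t - (u x).toReal))}
            ∩ {x | (t : EReal) < u x} = ∅ := by
          rw [Set.eq_empty_iff_forall_notMem]
          rintro x ⟨hx1, hx2⟩
          obtain ⟨hxy, hty⟩ := hureal t x hx2
          have h5 : Real.exp ((k + δ) * (t - (u x).toReal)) < 1 :=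
            Real.exp_lt_one_iff.2 (by nlinarith)
          have h6 : (1:ℝ) ≤ s := le_of_not_gt h1s
          simp only [Set.mem_setOf_eq] at hx1
          linarith
        rw [hempty]
        simp
    calc (∫⁻ s in Set.Ioi (0:ℝ), (μ.restrict {x | (t : EReal) < u x})
            {x | s < Real.exp ((k + δ) * (t - (u x).toReal))})
        ≤ ∫⁻ s in Set.Ioi (0:ℝ), Set.indicator (Set.Ioo (0:ℝ) 1)
            (fun s => ENNReal.ofReal (N (t + r s) - N t)) s :=
          lintegral_mono_ae (ae_restrict_of_forall_mem measurableSet_Ioi h2)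
      _ = ∫⁻ s in Set.Ioo (0:ℝ) 1, ENNReal.ofReal (N (t + r s) - N t) := by
          rw [lintegral_indicator measurableSet_Ioo,
            Measure.restrict_restrict measurableSet_Ioo,
            Set.inter_eq_self_of_subset_left Set.Ioo_subset_Ioi_self]
      _ = ENNReal.ofReal (J t) := by
          rw [hJ_def]
          exact (ofReal_integral_eq_lintegral_ofReal (hintJ t)
            (ae_restrict_of_forall_mem measurableSet_Ioo (hsubN t))).symm
  set H : ℝ → ℝ := fun t => ∫ s in Set.Ioo (0:ℝ) 1, Real.exp (-k * t) * N (t + r s)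
    with hH_def
  have hHg : ∀ t : ℝ, Real.exp (-k * t) * J t = H t - g t := by
    intro t
    rw [hJ_def, hH_def, hg_def]
    simp only
    rw [← integral_const_mul]
    have hsplit : (fun s => Real.exp (-k * t) * (N (t + r s) - N t))
        = fun s => Real.exp (-k * t) * N (t + r s) - Real.exp (-k * t) * N t := by
      funext s; ring
    rw [hsplit, integral_sub ((hintN t).const_mul _)
      (integrableOn_const (by simp [Real.volume_Ioo]))]
    rw [setIntegral_const]
    simp [Real.volume_Ioo]
  have hFle : ∀ t : ℝ,
      Real.exp (-k * t) *
        (∫⁻ x in {x | (t : EReal) < u x},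
          ENNReal.ofReal (Real.exp ((k + δ) * (t - (u x).toReal))) ∂μ).toReal
      ≤ H t - g t := by
    intro t
    rw [← hHg t]
    have h1 : (∫⁻ x in {x | (t : EReal) < u x},
        ENNReal.ofReal (Real.exp ((k + δ) * (t - (u x).toReal))) ∂μ).toReal ≤ J t := by
      have h2 := ENNReal.toReal_mono ENNReal.ofReal_ne_top (hIJ t)
      rwa [ENNReal.toReal_ofReal (hJ0 t)] at h2
    exact mul_le_mul_of_nonneg_left h1 (Real.exp_pos _).le
  -- limit of H
  have hHtend : Tendsto H atBot (nhds (c * ((k + δ) / δ))) := by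
    have hint_pow : IntegrableOn (fun s : ℝ => s ^ (-a)) (Set.Ioo (0:ℝ) 1) :=
      (intervalIntegral.integrableOn_Ioo_rpow_iff zero_lt_one).2 (by linarith)
    have habound : Integrable (fun s : ℝ => M * s ^ (-a))
        (volume.restrict (Set.Ioo (0:ℝ) 1)) := hint_pow.const_mul M
    have hbound : ∀ t : ℝ, ∀ s ∈ Set.Ioo (0:ℝ) 1,
        ‖Real.exp (-k * t) * N (t + r s)‖ ≤ M * s ^ (-a) := by
      intro t s hs
      rw [Real.norm_eq_abs, abs_of_nonneg (mul_nonneg (Real.exp_pos _).le (hN0 _)),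
        hkey t s hs]
      have h1 : (0:ℝ) ≤ s ^ (-a) := Real.rpow_nonneg hs.1.le _
      calc s ^ (-a) * g (t + r s) ≤ s ^ (-a) * M :=
            mul_le_mul_of_nonneg_left (hgM _) h1
        _ = M * s ^ (-a) := mul_comm _ _
    have hlim : ∀ s ∈ Set.Ioo (0:ℝ) 1,
        Tendsto (fun t => Real.exp (-k * t) * N (t + r s)) atBot
          (nhds (c * s ^ (-a))) := by
      intro s hs
      have h1 : Tendsto (fun t : ℝ => t + r s) atBot atBot :=
        tendsto_atBot_add_const_right atBot (r s) tendsto_id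
      have h2 : Tendsto (fun t => s ^ (-a) * g (t + r s)) atBot
          (nhds (s ^ (-a) * c)) := (hgc.comp h1).const_mul _
      rw [mul_comm c]
      exact Tendsto.congr (fun t => (hkey t s hs).symm) h2
    have hres := tendsto_integral_filter_of_dominated_convergence
      (μ := volume.restrict (Set.Ioo (0:ℝ) 1))
      (F := fun (t : ℝ) s => Real.exp (-k * t) * N (t + r s))
      (f := fun s => c * s ^ (-a))
      (bound := fun s => M * s ^ (-a))
      (Filter.Eventually.of_forall fun t =>
        ((hmeas2 t).const_mul _).aestronglyMeasurable)
      (Filter.Eventually.of_forall fun t =>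
        ae_restrict_of_forall_mem measurableSet_Ioo (hbound t))
      habound
      (ae_restrict_of_forall_mem measurableSet_Ioo hlim)
    have hval : (∫ s in Set.Ioo (0:ℝ) 1, c * s ^ (-a)) = c * ((k + δ) / δ) := by
      rw [integral_const_mul]
      congr 1
      rw [← integral_Ioc_eq_integral_Ioo,
        ← intervalIntegral.integral_of_le zero_le_one,
        integral_rpow (Or.inl (by linarith : (-1:ℝ) < -a)),
        Real.one_rpow, Real.zero_rpow (by linarith : -a + 1 ≠ 0)]
      rw [ha_def]
      field_simp
      have hne : -k + (k + δ) = δ := by ring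
      rw [hne]
      field_simp
      ring
    rw [hH_def]
    rw [← hval]
    exact hres
  have hfin : Tendsto (fun t => H t - g t) atBot (nhds (c * k / δ)) := by
    have h1 := hHtend.sub hgc
    have heq : c * ((k + δ) / δ) - c = c * k / δ := by
      field_simp
      ring
    rwa [heq] at h1
  have hbddF : IsBoundedUnder (· ≥ ·) atBot
      (fun t : ℝ => Real.exp (-k * t) *
        (∫⁻ x in {x | (t : EReal) < u x},
          ENNReal.ofReal (Real.exp ((k + δ) * (t - (u x).toReal))) ∂μ).toReal) :=
    isBoundedUnder_of ⟨0, fun t =>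
      mul_nonneg (Real.exp_pos _).le ENNReal.toReal_nonneg⟩
  have hmain := liminf_le_liminf (Filter.Eventually.of_forall hFle) hbddF
    hfin.isCoboundedUnder_ge
  exact hmain.trans_eq hfin.liminf_eq
end
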